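/- Let (e₀, a, b, p', q') be a normalized Diophantine solution for Σ(2,3,7,p,q), with associated delta function Δ. Then Δ(26pq) = 1, Δ(35pq) = 1, Δ(36pq) = 1, and Δ(39pq) = 1. -/
import Mathlib

/-- The delta function associated to a normalized Diophantine solution `(e₀, a, b, p', q')`
for `Σ(2,3,7,p,q)`:
`Δ(n) = 1 + |e₀|·n − ⌈n/2⌉ − ⌈an/3⌉ − ⌈bn/7⌉ − ⌈np'/p⌉ − ⌈nq'/q⌉`. -/
def delta237 (p q e₀ a b p' q' : ℤ) (n : ℤ) : ℤ :=
  1 + |e₀| * n - ⌈(n : ℚ) / 2⌉ - ⌈((a * n : ℤ) : ℚ) / 3⌉ - ⌈((b * n : ℤ) : ℚ) / 7⌉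
    - ⌈((n * p' : ℤ) : ℚ) / (p : ℚ)⌉ - ⌈((n * q' : ℤ) : ℚ) / (q : ℚ)⌉

lemma floor_int_div' (m d : ℤ) (hd : 0 < d) : ⌊(m:ℚ)/(d:ℚ)⌋ = m / d := by
  have h1 : ((d.toNat : ℕ) : ℤ) = d := Int.toNat_of_nonneg hd.le
  have := Rat.floor_intCast_div_natCast m d.toNat
  rw [h1] at this
  rwa [show ((d.toNat : ℕ) : ℚ) = (d : ℚ) by exact_mod_cast congrArg (Int.cast : ℤ → ℚ) h1] at this

lemma ceil_int_div' (m d : ℤ) (hd : 0 < d) : ⌈(m:ℚ)/(d:ℚ)⌉ = -(-m / d) := by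
  have h : ((-m : ℤ) : ℚ) / (d : ℚ) = -((m:ℚ)/(d:ℚ)) := by push_cast; ring
  have := floor_int_div' (-m) d hd
  rw [h, Int.floor_neg] at this
  omega

lemma ceil2' (m : ℤ) : ⌈(m:ℚ)/2⌉ = -(-m / 2) := by
  have := ceil_int_div' m 2 (by norm_num); norm_num at this ⊢; exact this

lemma ceil3' (m : ℤ) : ⌈(m:ℚ)/3⌉ = -(-m / 3) := by
  have := ceil_int_div' m 3 (by norm_num); norm_num at this ⊢; exact this

lemma ceil7' (m : ℤ) : ⌈(m:ℚ)/7⌉ = -(-m / 7) := by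
  have := ceil_int_div' m 7 (by norm_num); norm_num at this ⊢; exact this

lemma delta237_aux (p q e₀ a b p' q' k : ℤ) (hp0 : 0 < p) (hq0 : 0 < q) (he : e₀ < 0)
    (key : 42*(e₀*p*q) + 21*(p*q) + 14*(a*p*q) + 6*(b*p*q) + 42*(q*p') + 42*(p*q') = -1)
    (hk : k = 26 ∨ k = 35 ∨ k = 36 ∨ k = 39) :
    delta237 p q e₀ a b p' q' (k*p*q) = 1 := by
  unfold delta237
  rw [abs_of_neg he, ceil2', ceil3', ceil7', ceil_int_div' _ p hp0, ceil_int_div' _ q hq0,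
    show -((k*p*q)*p') = p * (-(k*(q*p'))) from by ring,
    Int.mul_ediv_cancel_left _ hp0.ne',
    show -((k*p*q)*q') = q * (-(k*(p*q'))) from by ring,
    Int.mul_ediv_cancel_left _ hq0.ne',
    show -(k*p*q) = -(k*(p*q)) from by ring,
    show -(a*(k*p*q)) = -(k*(a*p*q)) from by ring,
    show -(b*(k*p*q)) = -(k*(b*p*q)) from by ring,
    show -e₀*(k*p*q) = -(k*(e₀*p*q)) from by ring]
  generalize e₀*p*q = E at key ⊢
  generalize p*q = P at key ⊢
  generalize a*p*q = A at key ⊢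
  generalize b*p*q = B at key ⊢
  generalize q*p' = U at key ⊢
  generalize p*q' = V at key ⊢
  obtain rfl | rfl | rfl | rfl := hk <;> omega

/-- For a normalized Diophantine solution `(e₀, a, b, p', q')` for `Σ(2,3,7,p,q)`,
`Δ(26pq) = 1`, `Δ(35pq) = 1`, `Δ(36pq) = 1` and `Δ(39pq) = 1`. -/
theorem stmt15 (p q e₀ a b p' q' : ℤ)
    (hp : 11 ≤ p) (hpq : p < q)
    (hgcd : Int.gcd p q = 1) (hp42 : Int.gcd p 42 = 1) (hq42 : Int.gcd q 42 = 1)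
    (ha : a = 1 ∨ a = 2) (hb : 1 ≤ b ∧ b ≤ 6)
    (hp' : 1 ≤ p' ∧ p' ≤ p - 1) (hq' : 1 ≤ q' ∧ q' ≤ q - 1)
    (heq : 42*p*q*e₀ + 21*p*q + 14*a*p*q + 6*b*p*q + 42*p'*q + 42*p*q' = -1) :
    delta237 p q e₀ a b p' q' (26*p*q) = 1 ∧
    delta237 p q e₀ a b p' q' (35*p*q) = 1 ∧
    delta237 p q e₀ a b p' q' (36*p*q) = 1 ∧
    delta237 p q e₀ a b p' q' (39*p*q) = 1 := by
  have hp0 : (0:ℤ) < p := by omega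
  have hq0 : (0:ℤ) < q := by omega
  have he : e₀ < 0 := by
    by_contra h
    push_neg at h
    nlinarith [mul_pos hp0 hq0, mul_nonneg (mul_nonneg h hp0.le) hq0.le,
      mul_nonneg (mul_nonneg (by omega : (0:ℤ) ≤ a - 1) hp0.le) hq0.le,
      mul_nonneg (mul_nonneg (by omega : (0:ℤ) ≤ b - 1) hp0.le) hq0.le,
      mul_nonneg (by omega : (0:ℤ) ≤ p' - 1) hq0.le,
      mul_nonneg (by omega : (0:ℤ) ≤ q' - 1) hp0.le]
  have key : 42*(e₀*p*q) + 21*(p*q) + 14*(a*p*q) + 6*(b*p*q) + 42*(q*p') + 42*(p*q') = -1 := by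
    linear_combination heq
  exact ⟨delta237_aux p q e₀ a b p' q' 26 hp0 hq0 he key (by norm_num),
    delta237_aux p q e₀ a b p' q' 35 hp0 hq0 he key (by norm_num),
    delta237_aux p q e₀ a b p' q' 36 hp0 hq0 he key (by norm_num),
    delta237_aux p q e₀ a b p' q' 39 hp0 hq0 he key (by norm_num)⟩
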